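/- If V = ⟨v_1,…,v_ℓ⟩ is a sequence of moves that can be applied (in order) to a distribution μ, then Vμ ⪯ V̄μ, where V̄ is the corresponding sequence of extreme moves. -/

import Mathlib

/-- The total mass of `μ` on a set `A` of positions. -/
noncomputable def mass (μ : ℝ →₀ ℝ) (A : Set ℝ) : ℝ :=
  ∑ x ∈ μ.support, Set.indicator A μ x

/-- The `j`-th moment of a finitely supported mass function. -/
noncomputable def moment (j : ℕ) (μ : ℝ →₀ ℝ) : ℝ :=
  ∑ x ∈ μ.support, μ x * x ^ j

/-- The spread `S[μ] = Σ_{i<j} m_i m_j |x_i - x_j| = (1/2)·Σ_{x,y} μ(x) μ(y) |x - y|`. -/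
noncomputable def spread (μ : ℝ →₀ ℝ) : ℝ :=
  (1 / 2) * ∑ x ∈ μ.support, ∑ y ∈ μ.support, μ x * μ y * |x - y|

/-- A distribution: finitely supported, nonnegative, not identically zero. -/
def IsDistribution (μ : ℝ →₀ ℝ) : Prop :=
  (∀ x, 0 ≤ μ x) ∧ μ ≠ 0

/-- A move `([a, a+1], δ)`: a signed distribution `δ` supported in `[a, a+1]`
with vanishing total mass and first moment. -/
structure Move where
  a : ℝ
  δ : ℝ →₀ ℝ
  supp_subset : ∀ x, δ x ≠ 0 → a ≤ x ∧ x ≤ a + 1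
  m0 : moment 0 δ = 0
  m1 : moment 1 δ = 0

/-- The center of a move. -/
noncomputable def Move.center (v : Move) : ℝ := v.a + 1 / 2

/-- `μ 0, μ 1, …, μ ℓ` is a sequence of distributions obtained by applying the
moves `v 0, …, v (ℓ-1)` in order (each move applicable, i.e. each result is a
distribution). -/
def IsMoveSeq (ℓ : ℕ) (v : ℕ → Move) (μ : ℕ → ℝ →₀ ℝ) : Prop :=
  (∀ i ≤ ℓ, IsDistribution (μ i)) ∧ ∀ i < ℓ, μ (i + 1) = μ i + (v i).δ

/-- `μ_max(A) = max_{0 ≤ i ≤ ℓ} μ_i(A)`. -/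
noncomputable def muMax (ℓ : ℕ) (μ : ℕ → ℝ →₀ ℝ) (A : Set ℝ) : ℝ :=
  (Finset.range (ℓ + 1)).sup' (Finset.nonempty_range_iff.mpr (Nat.succ_ne_zero ℓ))
    (fun i => mass (μ i) A)

open scoped Classical in
/-- The number of moves among `v 0, …, v (ℓ-1)` whose center lies in `(a, ∞)`. -/
noncomputable def movesBeyond (ℓ : ℕ) (v : ℕ → Move) (a : ℝ) : ℕ :=
  ((Finset.range ℓ).filter (fun i => a < (v i).center)).card

/-- A sequence of moves is weight-constrained (w.r.t. the generated sequence of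
distributions) if for every `a` the number of moves centered in `(a, ∞)` is at
most `μ_max{x > a}`. -/
def WeightConstrained (ℓ : ℕ) (v : ℕ → Move) (μ : ℕ → ℝ →₀ ℝ) : Prop :=
  ∀ a : ℝ, (movesBeyond ℓ v a : ℝ) ≤ muMax ℓ μ {x | a < x}

/-- `μ'` is a basic split of `μ`: one point mass `(x, μ x)` of `μ` is replaced by
finitely many point masses of positive mass with total mass `μ x` and center of
mass at `x`, the remaining point masses being unchanged. -/
def BasicSplit (μ μ' : ℝ →₀ ℝ) : Prop :=
  ∃ (x : ℝ) (ν : ℝ →₀ ℝ), 0 < μ x ∧ (∀ y, 0 ≤ ν y) ∧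
    moment 0 ν = μ x ∧ moment 1 ν = μ x * x ∧ μ' = μ.erase x + ν

/-- `μ ⪯ μ'` : `μ'` is obtained from `μ` by finitely many basic splits. -/
def Splits (μ μ' : ℝ →₀ ℝ) : Prop := Relation.ReflTransGen BasicSplit μ μ'

/-- `ν` is the result of the extreme move on `[a, b]` applied to `μ`: `ν` agrees
with `μ` outside `[a, b]`, vanishes on `(a, b)`, and has the same total mass and
first moment as `μ` (so all mass in `[a, b]` is moved to the endpoints). -/
def IsExtremeMoveOn (a b : ℝ) (μ ν : ℝ →₀ ℝ) : Prop :=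
  (∀ x, x ∉ Set.Icc a b → ν x = μ x) ∧
  (∀ x, x ∈ Set.Ioo a b → ν x = 0) ∧
  moment 0 ν = moment 0 μ ∧ moment 1 ν = moment 1 μ


section ExtremeAuxSection
open scoped Classical


lemma moment_eq_sum (j : ℕ) (f : ℝ →₀ ℝ) {s : Finset ℝ} (h : f.support ⊆ s) :
    moment j f = ∑ x ∈ s, f x * x ^ j := by
  refine Finset.sum_subset h fun x _ hx => ?_
  rw [Finsupp.notMem_support_iff.mp hx, zero_mul]

lemma moment_zero_fun (j : ℕ) : moment j (0 : ℝ →₀ ℝ) = 0 := by simp [moment]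

lemma moment_add (j : ℕ) (f g : ℝ →₀ ℝ) : moment j (f + g) = moment j f + moment j g := by
  rw [moment_eq_sum j (f + g) (Finsupp.support_add),
      moment_eq_sum j f Finset.subset_union_left,
      moment_eq_sum j g Finset.subset_union_right, ← Finset.sum_add_distrib]
  exact Finset.sum_congr rfl fun x _ => by rw [Finsupp.add_apply]; ring

lemma moment_neg (j : ℕ) (f : ℝ →₀ ℝ) : moment j (-f) = - moment j f := by
  simp [moment, Finset.sum_neg_distrib]

lemma moment_sub (j : ℕ) (f g : ℝ →₀ ℝ) : moment j (f - g) = moment j f - moment j g := by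
  rw [sub_eq_add_neg, moment_add, moment_neg, sub_eq_add_neg]

lemma moment_smul (j : ℕ) (c : ℝ) (f : ℝ →₀ ℝ) : moment j (c • f) = c * moment j f := by
  rw [moment_eq_sum j _ (Finsupp.support_smul), moment, Finset.mul_sum]
  exact Finset.sum_congr rfl fun x _ => by rw [Finsupp.smul_apply, smul_eq_mul]; ring

lemma moment_finsetSum {ι : Type*} (j : ℕ) (s : Finset ι) (F : ι → ℝ →₀ ℝ) :
    moment j (∑ i ∈ s, F i) = ∑ i ∈ s, moment j (F i) := by
  induction s using Finset.cons_induction with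
  | empty => simp [moment]
  | cons a s ha ih => rw [Finset.sum_cons, Finset.sum_cons, moment_add, ih]

lemma moment_single (j : ℕ) (x m : ℝ) : moment j (Finsupp.single x m) = m * x ^ j := by
  rcases eq_or_ne m 0 with h | h
  · simp [moment, h]
  · rw [moment, Finsupp.support_single_ne_zero _ h, Finset.sum_singleton,
      Finsupp.single_eq_same]

lemma moment0_nonneg {f : ℝ →₀ ℝ} (hf : ∀ y, 0 ≤ f y) : 0 ≤ moment 0 f :=
  Finset.sum_nonneg fun x _ => by rw [pow_zero, mul_one]; exact hf x

lemma eq_zero_of_mass_zero {f : ℝ →₀ ℝ} (hf : ∀ y, 0 ≤ f y) (h0 : moment 0 f = 0) :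
    f = 0 := by
  have h := (Finset.sum_eq_zero_iff_of_nonneg
    (fun x _ => by rw [pow_zero, mul_one]; exact hf x)).mp h0
  ext y
  by_cases hy : y ∈ f.support
  · have := h y hy; rw [pow_zero, mul_one] at this; simpa using this
  · simpa using Finsupp.notMem_support_iff.mp hy

lemma moment_filter (j : ℕ) (p : ℝ → Prop) [DecidablePred p] (f : ℝ →₀ ℝ) :
    moment j (f.filter p) = ∑ x ∈ f.support.filter p, f x * x ^ j := by
  rw [moment, Finsupp.support_filter]
  exact Finset.sum_congr rfl fun x hx => by
    rw [Finsupp.filter_apply_pos _ _ (Finset.mem_filter.mp hx).2]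

namespace ExtremeAux

noncomputable def collapse (a b : ℝ) (f : ℝ →₀ ℝ) : ℝ →₀ ℝ :=
  f.filter (fun t => t ∉ Set.Ioo a b)
    + Finsupp.single a ((b * moment 0 (f.filter (fun t => t ∈ Set.Ioo a b))
        - moment 1 (f.filter (fun t => t ∈ Set.Ioo a b))) / (b - a))
    + Finsupp.single b ((moment 1 (f.filter (fun t => t ∈ Set.Ioo a b))
        - a * moment 0 (f.filter (fun t => t ∈ Set.Ioo a b))) / (b - a))

lemma collapse_zero (a b : ℝ) : collapse a b 0 = 0 := by
  simp [collapse, Finsupp.filter_zero, moment_zero_fun]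

lemma collapse_add (a b : ℝ) (f g : ℝ →₀ ℝ) :
    collapse a b (f + g) = collapse a b f + collapse a b g := by
  unfold collapse
  rw [Finsupp.filter_add, Finsupp.filter_add, moment_add, moment_add]
  ext x
  simp only [Finsupp.add_apply, Finsupp.single_apply]
  split_ifs <;> ring

lemma collapse_finsetSum {ι : Type*} (a b : ℝ) (s : Finset ι) (F : ι → ℝ →₀ ℝ) :
    collapse a b (∑ i ∈ s, F i) = ∑ i ∈ s, collapse a b (F i) := by
  induction s using Finset.cons_induction with
  | empty => simp [collapse_zero]
  | cons i s hi ih => rw [Finset.sum_cons, Finset.sum_cons, collapse_add, ih]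

lemma collapse_m0 (a b : ℝ) (hab : a < b) (f : ℝ →₀ ℝ) :
    moment 0 (collapse a b f) = moment 0 f := by
  have hne : b - a ≠ 0 := by linarith
  unfold collapse
  rw [moment_add, moment_add, moment_single, moment_single]
  conv_rhs => rw [← Finsupp.filter_pos_add_filter_neg f (fun t => t ∈ Set.Ioo a b)]
  rw [moment_add]
  field_simp
  ring

lemma collapse_m1 (a b : ℝ) (hab : a < b) (f : ℝ →₀ ℝ) :
    moment 1 (collapse a b f) = moment 1 f := by
  have hne : b - a ≠ 0 := by linarith
  unfold collapse
  rw [moment_add, moment_add, moment_single, moment_single]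
  conv_rhs => rw [← Finsupp.filter_pos_add_filter_neg f (fun t => t ∈ Set.Ioo a b)]
  rw [moment_add]
  field_simp
  ring

lemma collapse_apply_not_Icc (a b : ℝ) (hab : a ≤ b) (f : ℝ →₀ ℝ) {x : ℝ}
    (hx : x ∉ Set.Icc a b) : collapse a b f x = f x := by
  have hxa : a ≠ x := fun h => hx (h ▸ Set.left_mem_Icc.mpr hab)
  have hxb : b ≠ x := fun h => hx (h ▸ Set.right_mem_Icc.mpr hab)
  have hxIoo : x ∉ Set.Ioo a b := fun h => hx (Set.Ioo_subset_Icc_self h)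
  unfold collapse
  rw [Finsupp.add_apply, Finsupp.add_apply,
    Finsupp.filter_apply_pos (fun t => t ∉ Set.Ioo a b) f hxIoo,
    Finsupp.single_apply, Finsupp.single_apply, if_neg hxa, if_neg hxb]
  ring

lemma collapse_apply_Ioo (a b : ℝ) (f : ℝ →₀ ℝ) {x : ℝ}
    (hx : x ∈ Set.Ioo a b) : collapse a b f x = 0 := by
  have hxa : a ≠ x := fun h => absurd hx.1 (by rw [← h]; exact lt_irrefl a)
  have hxb : b ≠ x := fun h => absurd hx.2 (by rw [← h]; exact lt_irrefl b)
  unfold collapse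
  rw [Finsupp.add_apply, Finsupp.add_apply,
    Finsupp.filter_apply_neg _ _ (by simpa using hx),
    Finsupp.single_apply, Finsupp.single_apply, if_neg hxa, if_neg hxb]
  ring

lemma collapse_nonneg (a b : ℝ) (hab : a < b) (f : ℝ →₀ ℝ) (hf : ∀ y, 0 ≤ f y) :
    ∀ y, 0 ≤ collapse a b f y := by
  intro y
  have hba : (0:ℝ) < b - a := by linarith
  set g := f.filter (fun t => t ∈ Set.Ioo a b) with hg
  have hgpos : ∀ t, 0 ≤ g t := fun t => by
    rw [hg, Finsupp.filter_apply]; split_ifs; exacts [hf t, le_refl 0]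
  have hgsupp : ∀ t ∈ g.support, t ∈ Set.Ioo a b := fun t ht => by
    rw [hg, Finsupp.support_filter] at ht; exact (Finset.mem_filter.mp ht).2
  have hnum1 : 0 ≤ b * moment 0 g - moment 1 g := by
    have : b * moment 0 g - moment 1 g = ∑ t ∈ g.support, g t * (b - t) := by
      rw [moment, moment, Finset.mul_sum, ← Finset.sum_sub_distrib]
      exact Finset.sum_congr rfl fun t _ => by ring
    rw [this]
    exact Finset.sum_nonneg fun t ht =>
      mul_nonneg (hgpos t) (by linarith [(hgsupp t ht).2])
  have hnum2 : 0 ≤ moment 1 g - a * moment 0 g := by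
    have : moment 1 g - a * moment 0 g = ∑ t ∈ g.support, g t * (t - a) := by
      rw [moment, moment, Finset.mul_sum, ← Finset.sum_sub_distrib]
      exact Finset.sum_congr rfl fun t _ => by ring
    rw [this]
    exact Finset.sum_nonneg fun t ht =>
      mul_nonneg (hgpos t) (by linarith [(hgsupp t ht).1])
  unfold collapse
  rw [Finsupp.add_apply, Finsupp.add_apply]
  refine add_nonneg (add_nonneg ?_ ?_) ?_
  · rw [Finsupp.filter_apply]; split_ifs <;> first | exact hf y | exact le_refl 0
  · rw [Finsupp.single_apply]; split_ifs
    exacts [div_nonneg hnum1 hba.le, le_refl 0]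
  · rw [Finsupp.single_apply]; split_ifs
    exacts [div_nonneg hnum2 hba.le, le_refl 0]

lemma collapse_isExtreme (a b : ℝ) (hab : a < b) (f : ℝ →₀ ℝ) :
    IsExtremeMoveOn a b f (collapse a b f) :=
  ⟨fun _ hx => collapse_apply_not_Icc a b hab.le f hx,
   fun _ hx => collapse_apply_Ioo a b f hx,
   collapse_m0 a b hab f, collapse_m1 a b hab f⟩

lemma extreme_unique {a b : ℝ} (hab : a < b) {ν ν₁ ν₂ : ℝ →₀ ℝ}
    (h1 : IsExtremeMoveOn a b ν ν₁) (h2 : IsExtremeMoveOn a b ν ν₂) : ν₁ = ν₂ := by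
  set d := ν₁ - ν₂ with hd
  have hdval : ∀ x, x ≠ a → x ≠ b → d x = 0 := by
    intro x hxa hxb
    by_cases hx : x ∈ Set.Icc a b
    · have hIoo : x ∈ Set.Ioo a b :=
        ⟨lt_of_le_of_ne hx.1 (Ne.symm hxa), lt_of_le_of_ne hx.2 hxb⟩
      rw [hd, Finsupp.sub_apply, h1.2.1 x hIoo, h2.2.1 x hIoo, sub_zero]
    · rw [hd, Finsupp.sub_apply, h1.1 x hx, h2.1 x hx, sub_self]
  have hsupp : d.support ⊆ {a, b} := by
    intro x hx
    rw [Finsupp.mem_support_iff] at hx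
    by_contra h
    simp only [Finset.mem_insert, Finset.mem_singleton] at h
    push_neg at h
    exact hx (hdval x h.1 h.2)
  have hm0 : moment 0 d = 0 := by
    rw [hd, moment_sub, h1.2.2.1, h2.2.2.1, sub_self]
  have hm1 : moment 1 d = 0 := by
    rw [hd, moment_sub, h1.2.2.2, h2.2.2.2, sub_self]
  rw [moment_eq_sum 0 d hsupp, Finset.sum_pair hab.ne] at hm0
  rw [moment_eq_sum 1 d hsupp, Finset.sum_pair hab.ne] at hm1
  simp only [pow_zero, mul_one, pow_one] at hm0 hm1
  have hda : d a = 0 := by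
    have key : d a * (a - b) = 0 := by linear_combination hm1 - b * hm0
    have hne : a - b ≠ 0 := by linarith
    exact (mul_eq_zero.mp key).resolve_right hne
  have hdb : d b = 0 := by linarith
  have : d = 0 := by
    ext x
    rcases eq_or_ne x a with rfl | hxa
    · simpa using hda
    rcases eq_or_ne x b with rfl | hxb
    · simpa using hdb
    · simpa using hdval x hxa hxb
  have := sub_eq_zero.mp (hd ▸ this)
  exact this


lemma Dpos_aux {a b l u mL mU : ℝ} (hab : a < b) (hl : 0 < l) (hu : 0 < u)
    (hmLa : mL ≤ a * l) (hmUb : b * u ≤ mU) : 0 < l * mU - u * mL := by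
  nlinarith [mul_le_mul_of_nonneg_left hmUb hl.le, mul_le_mul_of_nonneg_left hmLa hu.le,
    mul_pos (sub_pos.mpr hab) (mul_pos hl hu)]

lemma subcrux {a b : ℝ} (hab : a < b) (R : ℝ →₀ ℝ) (hR : ∀ y, 0 ≤ R y)
    (hRint : ∀ y ∈ Set.Ioo a b, R y = 0) (Ma Mb : ℝ) (hMa : 0 ≤ Ma) (hMb : 0 ≤ Mb)
    (h0 : Ma + Mb = moment 0 R) (h1 : Ma * a + Mb * b = moment 1 R) :
    ∃ Ga Gb : ℝ →₀ ℝ, (∀ y, 0 ≤ Ga y) ∧ (∀ y, 0 ≤ Gb y) ∧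
      moment 0 Ga = Ma ∧ moment 1 Ga = Ma * a ∧
      moment 0 Gb = Mb ∧ moment 1 Gb = Mb * b ∧ Ga + Gb = R := by
  set L := R.filter (fun t => t ≤ a) with hLdef
  set U := R.filter (fun t => ¬ t ≤ a) with hUdef
  have hLU : L + U = R := Finsupp.filter_pos_add_filter_neg R _
  have hLpos : ∀ y, 0 ≤ L y := fun y => by
    rw [hLdef, Finsupp.filter_apply]; split_ifs <;> first | exact hR y | exact le_refl 0
  have hUpos : ∀ y, 0 ≤ U y := fun y => by
    rw [hUdef, Finsupp.filter_apply]; split_ifs <;> first | exact hR y | exact le_refl 0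
  have hLsupp : ∀ t ∈ L.support, t ≤ a := fun t ht => by
    rw [hLdef, Finsupp.support_filter] at ht; exact (Finset.mem_filter.mp ht).2
  have hUsupp : ∀ t ∈ U.support, b ≤ t := by
    intro t ht
    rw [hUdef, Finsupp.support_filter] at ht
    obtain ⟨htR, hta⟩ := Finset.mem_filter.mp ht
    push_neg at hta
    by_contra hb
    push_neg at hb
    exact (Finsupp.mem_support_iff.mp htR) (hRint t ⟨hta, hb⟩)
  set l := moment 0 L with hl
  set u := moment 0 U with hu
  set mL := moment 1 L with hmL
  set mU := moment 1 U with hmU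
  have hl0 : 0 ≤ l := moment0_nonneg hLpos
  have hu0 : 0 ≤ u := moment0_nonneg hUpos
  have hmLa : mL ≤ a * l := by
    rw [hmL, hl, moment, moment, Finset.mul_sum]
    refine Finset.sum_le_sum fun t ht => ?_
    have h1t := hLsupp t ht
    have h2t := hLpos t
    simp only [pow_one, pow_zero, mul_one]
    nlinarith
  have hmUb : b * u ≤ mU := by
    rw [hmU, hu, moment, moment, Finset.mul_sum]
    refine Finset.sum_le_sum fun t ht => ?_
    have h1t := hUsupp t ht
    have h2t := hUpos t
    simp only [pow_one, pow_zero, mul_one]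
    nlinarith
  have hm0 : l + u = Ma + Mb := by rw [h0, ← hLU, moment_add]
  have hm1 : mL + mU = Ma * a + Mb * b := by rw [h1, ← hLU, moment_add]
  clear_value L U l u mL mU
  rcases eq_or_ne u 0 with hu' | hu'
  · -- all mass left of a : Mb = 0
    have hU0 : U = 0 := eq_zero_of_mass_zero hUpos (hu ▸ hu')
    have hmU0 : mU = 0 := by rw [hmU, hU0, moment_zero_fun]
    have key : Mb * (b - a) = mL - a * l := by
      linear_combination a * hm0 - hm1 - a * hu' + hmU0
    have h2 : Mb * (b - a) ≤ 0 := by rw [key]; linarith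
    have hMb0 : Mb = 0 := by
      by_contra h
      have h3 : 0 < Mb := lt_of_le_of_ne hMb (Ne.symm h)
      nlinarith
    refine ⟨R, 0, hR, fun y => le_refl 0, ?_, ?_, ?_, ?_, add_zero R⟩
    · rw [← h0, hMb0, add_zero]
    · rw [← h1, hMb0, zero_mul, add_zero]
    · rw [moment_zero_fun, hMb0]
    · rw [moment_zero_fun, hMb0, zero_mul]
  rcases eq_or_ne l 0 with hl' | hl'
  · -- all mass right of b : Ma = 0
    have hL0 : L = 0 := eq_zero_of_mass_zero hLpos (hl ▸ hl')
    have hmL0 : mL = 0 := by rw [hmL, hL0, moment_zero_fun]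
    have key : Ma * (b - a) = b * u - mU := by
      linear_combination hm1 - b * hm0 + b * hl' - hmL0
    have h2 : Ma * (b - a) ≤ 0 := by rw [key]; linarith
    have hMa0 : Ma = 0 := by
      by_contra h
      have h3 : 0 < Ma := lt_of_le_of_ne hMa (Ne.symm h)
      nlinarith
    refine ⟨0, R, fun y => le_refl 0, hR, ?_, ?_, ?_, ?_, zero_add R⟩
    · rw [moment_zero_fun, hMa0]
    · rw [moment_zero_fun, hMa0, zero_mul]
    · rw [← h0, hMa0, zero_add]
    · rw [← h1, hMa0, zero_mul, zero_add]
  -- main case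
  have hlpos : 0 < l := lt_of_le_of_ne hl0 (Ne.symm hl')
  have hupos : 0 < u := lt_of_le_of_ne hu0 (Ne.symm hu')
  set D := l * mU - u * mL with hD
  clear_value D
  have hau : a * u ≤ b * u := mul_le_mul_of_nonneg_right hab.le hu0
  have hal : a * l ≤ b * l := mul_le_mul_of_nonneg_right hab.le hl0
  have hDpos : 0 < D := hD ▸ Dpos_aux hab hlpos hupos hmLa hmUb
  refine ⟨(Ma * (mU - a * u) / D) • L + (Ma * (a * l - mL) / D) • U,
          (Mb * (mU - b * u) / D) • L + (Mb * (b * l - mL) / D) • U,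
          ?_, ?_, ?_, ?_, ?_, ?_, ?_⟩
  · intro y
    rw [Finsupp.add_apply, Finsupp.smul_apply, Finsupp.smul_apply, smul_eq_mul, smul_eq_mul]
    have c1 : 0 ≤ Ma * (mU - a * u) / D :=
      div_nonneg (mul_nonneg hMa (by linarith)) hDpos.le
    have c2 : 0 ≤ Ma * (a * l - mL) / D :=
      div_nonneg (mul_nonneg hMa (by linarith)) hDpos.le
    exact add_nonneg (mul_nonneg c1 (hLpos y)) (mul_nonneg c2 (hUpos y))
  · intro y
    rw [Finsupp.add_apply, Finsupp.smul_apply, Finsupp.smul_apply, smul_eq_mul, smul_eq_mul]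
    have c1 : 0 ≤ Mb * (mU - b * u) / D :=
      div_nonneg (mul_nonneg hMb (by linarith)) hDpos.le
    have c2 : 0 ≤ Mb * (b * l - mL) / D :=
      div_nonneg (mul_nonneg hMb (by linarith)) hDpos.le
    exact add_nonneg (mul_nonneg c1 (hLpos y)) (mul_nonneg c2 (hUpos y))
  · rw [moment_add, moment_smul, moment_smul, ← hl, ← hu]
    rw [div_mul_eq_mul_div, div_mul_eq_mul_div, ← add_div, div_eq_iff hDpos.ne', hD]
    ring
  · rw [moment_add, moment_smul, moment_smul, ← hmL, ← hmU]
    rw [div_mul_eq_mul_div, div_mul_eq_mul_div, ← add_div, div_eq_iff hDpos.ne', hD]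
    ring
  · rw [moment_add, moment_smul, moment_smul, ← hl, ← hu]
    rw [div_mul_eq_mul_div, div_mul_eq_mul_div, ← add_div, div_eq_iff hDpos.ne', hD]
    ring
  · rw [moment_add, moment_smul, moment_smul, ← hmL, ← hmU]
    rw [div_mul_eq_mul_div, div_mul_eq_mul_div, ← add_div, div_eq_iff hDpos.ne', hD]
    ring
  · have hA : Ma * (mU - a * u) / D + Mb * (mU - b * u) / D = 1 := by
      rw [← add_div, div_eq_iff hDpos.ne']
      linear_combination u * hm1 - hD - mU * hm0
    have hB : Ma * (a * l - mL) / D + Mb * (b * l - mL) / D = 1 := by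
      rw [← add_div, div_eq_iff hDpos.ne']
      linear_combination mL * hm0 - l * hm1 - hD
    calc (Ma * (mU - a * u) / D) • L + (Ma * (a * l - mL) / D) • U
          + ((Mb * (mU - b * u) / D) • L + (Mb * (b * l - mL) / D) • U)
        = (Ma * (mU - a * u) / D + Mb * (mU - b * u) / D) • L
          + (Ma * (a * l - mL) / D + Mb * (b * l - mL) / D) • U := by
          rw [add_smul, add_smul]; abel
      _ = L + U := by rw [hA, hB, one_smul, one_smul]
      _ = R := hLU


/-- `ν` decomposes into nonnegative clouds, one per point of `μ`, with matching
mass and barycenter. -/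
def Coupling (μ ν : ℝ →₀ ℝ) : Prop :=
  ∃ F : ℝ → ℝ →₀ ℝ, (∀ x y, 0 ≤ F x y) ∧ (∀ x, moment 0 (F x) = μ x) ∧
    (∀ x, moment 1 (F x) = μ x * x) ∧ ν = ∑ x ∈ μ.support, F x

lemma coupling_self (μ : ℝ →₀ ℝ) (hμ : ∀ x, 0 ≤ μ x) : Coupling μ μ := by
  refine ⟨fun x => Finsupp.single x (μ x), ?_, ?_, ?_, ?_⟩
  · intro x y
    rw [Finsupp.single_apply]
    split_ifs
    exacts [hμ x, le_refl 0]
  · intro x; rw [moment_single, pow_zero, mul_one]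
  · intro x; rw [moment_single, pow_one]
  · exact (Finsupp.sum_single μ).symm

lemma coupling_extreme {a b : ℝ} (hab : a < b) {μ ν ν' : ℝ →₀ ℝ}
    (hC : Coupling μ ν) (hext : IsExtremeMoveOn a b ν ν') : Coupling μ ν' := by
  obtain ⟨F, hFpos, hF0, hF1, hFsum⟩ := hC
  refine ⟨fun x => collapse a b (F x), fun x => collapse_nonneg a b hab (F x) (hFpos x),
    fun x => by rw [collapse_m0 a b hab, hF0], fun x => by rw [collapse_m1 a b hab, hF1], ?_⟩
  rw [← collapse_finsetSum, ← hFsum]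
  exact extreme_unique hab hext (collapse_isExtreme a b hab ν)

lemma coupling_move {a b : ℝ} (hab : a < b) {μ δ ν : ℝ →₀ ℝ}
    (hμ : ∀ x, 0 ≤ μ x) (hμ' : ∀ x, 0 ≤ (μ + δ) x)
    (hδsupp : ∀ x, δ x ≠ 0 → a ≤ x ∧ x ≤ b)
    (hδ0 : moment 0 δ = 0) (hδ1 : moment 1 δ = 0)
    (hν : ∀ x ∈ Set.Ioo a b, ν x = 0)
    (hC : Coupling μ ν) : Coupling (μ + δ) ν := by
  obtain ⟨F, hFpos, hF0, hF1, hFsum⟩ := hC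
  have hba : (0:ℝ) < b - a := by linarith
  have hδout : ∀ x, x ∉ Set.Icc a b → δ x = 0 := by
    intro x hx
    by_contra h
    exact hx (Set.mem_Icc.mpr (hδsupp x h))
  have hμ'out : ∀ x, x ∉ Set.Icc a b → (μ + δ) x = μ x := by
    intro x hx
    rw [Finsupp.add_apply, hδout x hx, add_zero]
  -- the pooled resource R and the untouched part Q
  set R : ℝ →₀ ℝ := ∑ x ∈ μ.support.filter (fun t => t ∈ Set.Icc a b), F x with hRdef
  set Q : ℝ →₀ ℝ := ∑ x ∈ μ.support.filter (fun t => ¬ t ∈ Set.Icc a b), F x with hQdef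
  have hRQ : R + Q = ν := by
    rw [hRdef, hQdef, hFsum]
    exact Finset.sum_filter_add_sum_filter_not μ.support _ F
  have hRpos : ∀ y, 0 ≤ R y := by
    intro y
    rw [hRdef, Finsupp.finset_sum_apply]
    exact Finset.sum_nonneg fun x _ => hFpos x y
  have hQpos : ∀ y, 0 ≤ Q y := by
    intro y
    rw [hQdef, Finsupp.finset_sum_apply]
    exact Finset.sum_nonneg fun x _ => hFpos x y
  have hRIoo : ∀ y ∈ Set.Ioo a b, R y = 0 := by
    intro y hy
    have h1 : R y + Q y = 0 := by
      rw [← Finsupp.add_apply, hRQ]; exact hν y hy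
    linarith [hRpos y, hQpos y]
  -- moments of R
  have hR0 : moment 0 R = ∑ x ∈ μ.support.filter (fun t => t ∈ Set.Icc a b), μ x * x ^ 0 := by
    rw [hRdef, moment_finsetSum]
    exact Finset.sum_congr rfl fun x _ => by rw [hF0, pow_zero, mul_one]
  have hR1 : moment 1 R = ∑ x ∈ μ.support.filter (fun t => t ∈ Set.Icc a b), μ x * x ^ 1 := by
    rw [hRdef, moment_finsetSum]
    exact Finset.sum_congr rfl fun x _ => by rw [hF1, pow_one]
  -- moments transfer from μ to μ + δ on [a,b]
  have hδfilter : δ.filter (fun t => t ∈ Set.Icc a b) = δ :=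
    (Finsupp.filter_eq_self_iff _ _).mpr fun x hx => Set.mem_Icc.mpr (hδsupp x hx)
  have hT : ∀ j : ℕ, moment j R = (∑ x ∈ μ.support.filter (fun t => t ∈ Set.Icc a b), μ x * x ^ j) →
      ∑ x ∈ (μ + δ).support.filter (fun t => t ∈ Set.Icc a b), (μ + δ) x * x ^ j
      = moment j R + moment j δ := by
    intro j hj
    rw [← moment_filter, Finsupp.filter_add, moment_add, hδfilter, moment_filter, ← hj]
  have hT0 := hT 0 hR0
  have hT1 := hT 1 hR1
  clear hT
  -- endpoint masses
  set T : Finset ℝ := (μ + δ).support.filter (fun t => t ∈ Set.Icc a b) with hTdef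
  have hTmem : ∀ x ∈ T, x ∈ Set.Icc a b := fun x hx => (Finset.mem_filter.mp hx).2
  set Ma : ℝ := ∑ x ∈ T, (μ + δ) x * (b - x) / (b - a) with hMadef
  set Mb : ℝ := ∑ x ∈ T, (μ + δ) x * (x - a) / (b - a) with hMbdef
  have hMa : 0 ≤ Ma := Finset.sum_nonneg fun x hx =>
    div_nonneg (mul_nonneg (hμ' x) (by linarith [(hTmem x hx).2])) hba.le
  have hMb : 0 ≤ Mb := Finset.sum_nonneg fun x hx =>
    div_nonneg (mul_nonneg (hμ' x) (by linarith [(hTmem x hx).1])) hba.le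
  have hsum0 : Ma + Mb = moment 0 R := by
    rw [hMadef, hMbdef, ← Finset.sum_add_distrib]
    rw [show moment 0 R + moment 0 δ = moment 0 R + moment 0 δ from rfl] at hT0
    rw [hδ0, add_zero] at hT0
    rw [← hT0]
    refine Finset.sum_congr rfl fun x _ => ?_
    rw [pow_zero, mul_one, ← add_div, ← mul_add]
    rw [show b - x + (x - a) = b - a by ring, mul_div_assoc, div_self hba.ne', mul_one]
  have hsum1 : Ma * a + Mb * b = moment 1 R := by
    rw [hδ1, add_zero] at hT1
    rw [hMadef, hMbdef, Finset.sum_mul, Finset.sum_mul, ← Finset.sum_add_distrib, ← hT1]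
    refine Finset.sum_congr rfl fun x _ => ?_
    rw [pow_one]
    field_simp
    ring
  obtain ⟨Ga, Gb, hGapos, hGbpos, hGa0, hGa1, hGb0, hGb1, hGaGb⟩ :=
    subcrux hab R hRpos hRIoo Ma Mb hMa hMb hsum0 hsum1
  -- the new clouds
  set F' : ℝ → ℝ →₀ ℝ := fun x =>
    if x ∈ Set.Icc a b then
      ((μ + δ) x * (b - x) / (b - a) / Ma) • Ga + ((μ + δ) x * (x - a) / (b - a) / Mb) • Gb
    else F x with hF'def
  have hkeyA : ∀ x ∈ Set.Icc a b, (μ + δ) x * (b - x) / (b - a) / Ma * Ma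
      = (μ + δ) x * (b - x) / (b - a) := by
    intro x hx
    rcases eq_or_ne Ma 0 with h | h
    · rw [h, mul_zero]
      symm
      rcases eq_or_ne ((μ + δ) x) 0 with h' | h'
      · rw [h', zero_mul, zero_div]
      · have hxT : x ∈ T := Finset.mem_filter.mpr ⟨Finsupp.mem_support_iff.mpr h', hx⟩
        have hsum : ∑ y ∈ T, (μ + δ) y * (b - y) / (b - a) = 0 := by rw [← hMadef]; exact h
        exact (Finset.sum_eq_zero_iff_of_nonneg fun y hy =>
          div_nonneg (mul_nonneg (hμ' y) (by linarith [(hTmem y hy).2])) hba.le).mp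
          hsum x hxT
    · rw [div_mul_cancel₀ _ h]
  have hkeyB : ∀ x ∈ Set.Icc a b, (μ + δ) x * (x - a) / (b - a) / Mb * Mb
      = (μ + δ) x * (x - a) / (b - a) := by
    intro x hx
    rcases eq_or_ne Mb 0 with h | h
    · rw [h, mul_zero]
      symm
      rcases eq_or_ne ((μ + δ) x) 0 with h' | h'
      · rw [h', zero_mul, zero_div]
      · have hxT : x ∈ T := Finset.mem_filter.mpr ⟨Finsupp.mem_support_iff.mpr h', hx⟩
        have hsum : ∑ y ∈ T, (μ + δ) y * (y - a) / (b - a) = 0 := by rw [← hMbdef]; exact h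
        exact (Finset.sum_eq_zero_iff_of_nonneg fun y hy =>
          div_nonneg (mul_nonneg (hμ' y) (by linarith [(hTmem y hy).1])) hba.le).mp
          hsum x hxT
    · rw [div_mul_cancel₀ _ h]
  refine ⟨F', ?_, ?_, ?_, ?_⟩
  · -- nonnegativity
    intro x y
    rw [hF'def]
    dsimp only
    split_ifs with hx
    · rw [Finsupp.add_apply, Finsupp.smul_apply, Finsupp.smul_apply, smul_eq_mul, smul_eq_mul]
      rw [Set.mem_Icc] at hx
      have c1 : 0 ≤ (μ + δ) x * (b - x) / (b - a) / Ma :=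
        div_nonneg (div_nonneg (mul_nonneg (hμ' x) (by linarith)) hba.le) hMa
      have c2 : 0 ≤ (μ + δ) x * (x - a) / (b - a) / Mb :=
        div_nonneg (div_nonneg (mul_nonneg (hμ' x) (by linarith)) hba.le) hMb
      exact add_nonneg (mul_nonneg c1 (hGapos y)) (mul_nonneg c2 (hGbpos y))
    · exact hFpos x y
  · -- masses
    intro x
    rw [hF'def]
    dsimp only
    split_ifs with hx
    · rw [moment_add, moment_smul, moment_smul, hGa0, hGb0, hkeyA x hx, hkeyB x hx,
        ← add_div, ← mul_add, show b - x + (x - a) = b - a by ring,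
        mul_div_assoc, div_self hba.ne', mul_one]
    · rw [hF0, hμ'out x hx]
  · -- barycenters
    intro x
    rw [hF'def]
    dsimp only
    split_ifs with hx
    · rw [moment_add, moment_smul, moment_smul, hGa1, hGb1,
        show (μ + δ) x * (b - x) / (b - a) / Ma * (Ma * a)
          = (μ + δ) x * (b - x) / (b - a) / Ma * Ma * a by ring,
        show (μ + δ) x * (x - a) / (b - a) / Mb * (Mb * b)
          = (μ + δ) x * (x - a) / (b - a) / Mb * Mb * b by ring,
        hkeyA x hx, hkeyB x hx]
      field_simp
      ring
    · rw [hF1, hμ'out x hx]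
  · -- the total
    rw [← Finset.sum_filter_add_sum_filter_not ((μ + δ).support) (fun t => t ∈ Set.Icc a b) F']
    have houtsupp : (μ + δ).support.filter (fun t => ¬ t ∈ Set.Icc a b)
        = μ.support.filter (fun t => ¬ t ∈ Set.Icc a b) := by
      ext x
      simp only [Finset.mem_filter, Finsupp.mem_support_iff]
      constructor
      · rintro ⟨h1, h2⟩; exact ⟨by rwa [hμ'out x h2] at h1, h2⟩
      · rintro ⟨h1, h2⟩; exact ⟨by rwa [hμ'out x h2], h2⟩
    have hQpart : ∑ x ∈ (μ + δ).support.filter (fun t => ¬ t ∈ Set.Icc a b), F' x = Q := by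
      rw [houtsupp, hQdef]
      refine Finset.sum_congr rfl fun x hx => ?_
      rw [hF'def]
      exact if_neg (Finset.mem_filter.mp hx).2
    have hRpart : ∑ x ∈ (μ + δ).support.filter (fun t => t ∈ Set.Icc a b), F' x = Ga + Gb := by
      have e1 : ∑ x ∈ T, F' x = (∑ x ∈ T, (μ + δ) x * (b - x) / (b - a) / Ma) • Ga
          + (∑ x ∈ T, (μ + δ) x * (x - a) / (b - a) / Mb) • Gb := by
        rw [Finset.sum_smul, Finset.sum_smul, ← Finset.sum_add_distrib]
        refine Finset.sum_congr rfl fun x hx => ?_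
        rw [hF'def]
        exact if_pos (hTmem x hx)
      have e2 : (∑ x ∈ T, (μ + δ) x * (b - x) / (b - a) / Ma) • Ga = Ga := by
        rw [← Finset.sum_div, ← hMadef]
        rcases eq_or_ne Ma 0 with h | h
        · have : Ga = 0 := eq_zero_of_mass_zero hGapos (by rw [hGa0, h])
          rw [this, smul_zero]
        · rw [div_self h, one_smul]
      have e3 : (∑ x ∈ T, (μ + δ) x * (x - a) / (b - a) / Mb) • Gb = Gb := by
        rw [← Finset.sum_div, ← hMbdef]
        rcases eq_or_ne Mb 0 with h | h
        · have : Gb = 0 := eq_zero_of_mass_zero hGbpos (by rw [hGb0, h])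
          rw [this, smul_zero]
        · rw [div_self h, one_smul]
      rw [← hTdef, e1, e2, e3]
    rw [hQpart, hRpart, hGaGb]
    exact hRQ.symm


lemma splitsAux (s : Finset ℝ) : ∀ (μ ρ : ℝ →₀ ℝ) (F : ℝ → ℝ →₀ ℝ),
    (∀ y, 0 ≤ μ y) → (∀ y, 0 ≤ ρ y) → μ.support ⊆ s →
    (∀ x ∈ s, ∀ y, 0 ≤ F x y) → (∀ x ∈ s, moment 0 (F x) = μ x) →
    (∀ x ∈ s, moment 1 (F x) = μ x * x) →
    Splits (μ + ρ) (ρ + ∑ x ∈ s, F x) := by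
  induction s using Finset.induction with
  | empty =>
    intro μ ρ F hμ hρ hsupp hFpos hF0 hF1
    have hμ0 : μ = 0 := by
      ext y
      rcases Finset.subset_empty.mp hsupp with h
      simp [Finsupp.support_eq_empty.mp h]
    rw [hμ0, zero_add, Finset.sum_empty, add_zero]
    exact Relation.ReflTransGen.refl
  | insert x s hx ih =>
    intro μ ρ F hμ hρ hsupp hFpos hF0 hF1
    rcases eq_or_lt_of_le (hμ x) with hμx | hμx
    · -- μ x = 0 : the cloud F x is empty, skip
      have hFx0 : F x = 0 :=
        eq_zero_of_mass_zero (hFpos x (Finset.mem_insert_self x s))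
          (by rw [hF0 x (Finset.mem_insert_self x s), ← hμx])
      have hsupp' : μ.support ⊆ s := by
        intro y hy
        rcases Finset.mem_insert.mp (hsupp hy) with h | h
        · subst h
          exact absurd hμx.symm (Finsupp.mem_support_iff.mp hy)
        · exact h
      rw [Finset.sum_insert hx, hFx0, zero_add]
      exact ih μ ρ F hμ hρ hsupp' (fun z hz => hFpos z (Finset.mem_insert_of_mem hz))
        (fun z hz => hF0 z (Finset.mem_insert_of_mem hz))
        (fun z hz => hF1 z (Finset.mem_insert_of_mem hz))
    · -- μ x > 0 : split the point x
      have hxmem := Finset.mem_insert_self x s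
      have hstep : BasicSplit (μ + ρ) (μ.erase x + (ρ + F x)) := by
        refine ⟨x, F x + Finsupp.single x (ρ x), ?_, ?_, ?_, ?_, ?_⟩
        · rw [Finsupp.add_apply]; linarith [hρ x]
        · intro y
          rw [Finsupp.add_apply, Finsupp.single_apply]
          split_ifs
          · linarith [hFpos x hxmem y, hρ x]
          · linarith [hFpos x hxmem y]
        · rw [moment_add, moment_single, hF0 x hxmem, pow_zero, mul_one, Finsupp.add_apply]
        · rw [moment_add, moment_single, hF1 x hxmem, pow_one, Finsupp.add_apply]; ring
        · have hrearr : Finsupp.erase x ρ + (F x + Finsupp.single x (ρ x)) = ρ + F x := by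
            rw [add_comm (F x) (Finsupp.single x (ρ x)), ← add_assoc, Finsupp.erase_add_single]
          rw [Finsupp.erase_add, add_assoc, hrearr]
      have hrest : Splits (μ.erase x + (ρ + F x)) ((ρ + F x) + ∑ z ∈ s, F z) := by
        refine ih (μ.erase x) (ρ + F x) F ?_ ?_ ?_ ?_ ?_ ?_
        · intro y
          rw [Finsupp.erase_apply]
          split_ifs
          · exact le_refl 0
          · exact hμ y
        · intro y
          rw [Finsupp.add_apply]
          exact add_nonneg (hρ y) (hFpos x hxmem y)
        · intro y hy
          have h1 := Finsupp.support_erase (f := μ) (a := x) ▸ hy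
          have h2 := Finset.mem_erase.mp h1
          rcases Finset.mem_insert.mp (hsupp h2.2) with h | h
          · exact absurd h h2.1
          · exact h
        · exact fun z hz => hFpos z (Finset.mem_insert_of_mem hz)
        · intro z hz
          rw [hF0 z (Finset.mem_insert_of_mem hz), Finsupp.erase_apply,
            if_neg (by rintro rfl; exact hx hz)]
        · intro z hz
          rw [hF1 z (Finset.mem_insert_of_mem hz), Finsupp.erase_apply,
            if_neg (by rintro rfl; exact hx hz)]
      have : Splits (μ + ρ) ((ρ + F x) + ∑ z ∈ s, F z) :=
        Relation.ReflTransGen.head hstep hrest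
      rw [Finset.sum_insert hx]
      have heq : (ρ + F x) + ∑ z ∈ s, F z = ρ + (F x + ∑ z ∈ s, F z) := by
        rw [add_assoc]
      rwa [heq] at this

lemma coupling_splits {μ ν : ℝ →₀ ℝ} (hμ : ∀ x, 0 ≤ μ x) (hC : Coupling μ ν) :
    Splits μ ν := by
  obtain ⟨F, hFpos, hF0, hF1, hFsum⟩ := hC
  have := splitsAux μ.support μ 0 F hμ (fun y => le_refl 0) (subset_refl _)
    (fun x _ => hFpos x) (fun x _ => hF0 x) (fun x _ => hF1 x)
  rwa [add_zero, zero_add, ← hFsum] at this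

end ExtremeAux

end ExtremeAuxSection

/-- **Theorem.** If `V = ⟨v 0, …, v (ℓ-1)⟩` is a sequence of moves that can be
applied in order to `μ 0`, generating `μ 0, …, μ ℓ`, and `ν 0, …, ν ℓ` is
generated from `ν 0 = μ 0` by the corresponding sequence of extreme moves, then
`Vμ ⪯ V̄μ`, i.e. `μ ℓ ⪯ ν ℓ`. -/
theorem moves_split_extreme_seq (ℓ : ℕ) (v : ℕ → Move) (μ ν : ℕ → ℝ →₀ ℝ)
    (hseq : IsMoveSeq ℓ v μ) (hν0 : ν 0 = μ 0)
    (hext : ∀ i < ℓ, IsExtremeMoveOn (v i).a ((v i).a + 1) (ν i) (ν (i + 1))) :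
    Splits (μ ℓ) (ν ℓ) := by
  have key : ∀ i ≤ ℓ, ExtremeAux.Coupling (μ i) (ν i) := by
    intro i
    induction i with
    | zero =>
      intro _
      rw [hν0]
      exact ExtremeAux.coupling_self (μ 0) (hseq.1 0 (Nat.zero_le ℓ)).1
    | succ n ihn =>
      intro hn
      have hnℓ : n < ℓ := hn
      have hab : (v n).a < (v n).a + 1 := by linarith
      have h1 : ExtremeAux.Coupling (μ n) (ν (n + 1)) :=
        ExtremeAux.coupling_extreme hab (ihn hnℓ.le) (hext n hnℓ)
      rw [hseq.2 n hnℓ]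
      refine ExtremeAux.coupling_move hab (hseq.1 n hnℓ.le).1 ?_ ((v n).supp_subset)
        ((v n).m0) ((v n).m1) ((hext n hnℓ).2.1) h1
      have := (hseq.1 (n + 1) hn).1
      rwa [hseq.2 n hnℓ] at this
  exact ExtremeAux.coupling_splits (hseq.1 ℓ le_rfl).1 (key ℓ le_rfl)
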